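/- Let P be a probability distribution on X × A × B with |A| = |B| = 2 and |X| = d > 2. Then the no-signaling simultaneous guessing probability is at most min{ 2·p_c, p_c + 1/8 }, where p_c is the classical simultaneous guessing probability. -/

import Mathlib

open Finset

/-- Maximal coupling of two probability vectors on `Fin d`. -/
lemma maximal_coupling {d : ℕ} (p q : Fin d → ℝ)
    (hp0 : ∀ x, 0 ≤ p x) (hq0 : ∀ x, 0 ≤ q x)
    (hp1 : ∑ x, p x = 1) (hq1 : ∑ x, q x = 1) :
    ∃ M : Fin d → Fin d → ℝ,
      (∀ x y, 0 ≤ M x y) ∧ (∀ x, ∑ y, M x y = p x) ∧ (∀ y, ∑ x, M x y = q y) ∧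
      (∀ x, min (p x) (q x) ≤ M x x) := by
  set m : ℝ := ∑ x, min (p x) (q x) with hm
  have hmin0 : ∀ x, 0 ≤ min (p x) (q x) := fun x => le_min (hp0 x) (hq0 x)
  have hrp : ∀ x, 0 ≤ p x - min (p x) (q x) := fun x => by
    simp [sub_nonneg, min_le_left]
  have hrq : ∀ x, 0 ≤ q x - min (p x) (q x) := fun x => by
    simp [sub_nonneg, min_le_right]
  have hm1 : m ≤ 1 := by
    rw [hm, ← hp1]
    exact Finset.sum_le_sum (fun x _ => min_le_left _ _)
  have hrpsum : ∑ x, (p x - min (p x) (q x)) = 1 - m := by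
    rw [Finset.sum_sub_distrib, hp1, hm]
  have hrqsum : ∑ x, (q x - min (p x) (q x)) = 1 - m := by
    rw [Finset.sum_sub_distrib, hq1, hm]
  refine ⟨fun x y => (if x = y then min (p x) (q x) else 0)
      + (p x - min (p x) (q x)) * (q y - min (p y) (q y)) / (1 - m), ?_, ?_, ?_, ?_⟩
  · intro x y
    have h1 : (0:ℝ) ≤ if x = y then min (p x) (q x) else 0 := by
      split <;> simp [hmin0 x]
    have h2 : (0:ℝ) ≤ (p x - min (p x) (q x)) * (q y - min (p y) (q y)) / (1 - m) :=
      div_nonneg (mul_nonneg (hrp x) (hrq y)) (by linarith)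
    linarith
  · intro x
    rw [Finset.sum_add_distrib]
    have h1 : ∑ y, (if x = y then min (p x) (q x) else 0) = min (p x) (q x) := by
      rw [Finset.sum_ite_eq univ x (fun _ => min (p x) (q x))]
      simp
    have h2 : ∑ y, (p x - min (p x) (q x)) * (q y - min (p y) (q y)) / (1 - m)
        = (p x - min (p x) (q x)) * (1 - m) / (1 - m) := by
      rw [← Finset.sum_div, ← Finset.mul_sum, hrqsum]
    rw [h1, h2]
    by_cases hz : (1:ℝ) - m = 0
    · -- then p x = min x
      have hpx : p x - min (p x) (q x) = 0 := by
        have hsum : ∑ x, (p x - min (p x) (q x)) = 0 := by rw [hrpsum, hz]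
        have := (Finset.sum_eq_zero_iff_of_nonneg (fun x _ => hrp x)).mp hsum x (mem_univ x)
        exact this
      have hpx' : p x ⊓ q x = p x := by linarith
      rw [hpx']
      simp
    · rw [mul_div_assoc, div_self hz]
      ring
  · intro y
    rw [Finset.sum_add_distrib]
    have h1 : ∑ x, (if x = y then min (p x) (q x) else 0) = min (p y) (q y) := by
      rw [Finset.sum_ite_eq' univ y (fun x => min (p x) (q x))]
      simp
    have h2 : ∑ x, (p x - min (p x) (q x)) * (q y - min (p y) (q y)) / (1 - m)
        = (1 - m) * (q y - min (p y) (q y)) / (1 - m) := by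
      rw [← Finset.sum_div, ← Finset.sum_mul, hrpsum]
    rw [h1, h2]
    by_cases hz : (1:ℝ) - m = 0
    · have hqy : q y - min (p y) (q y) = 0 := by
        have hsum : ∑ x, (q x - min (p x) (q x)) = 0 := by rw [hrqsum, hz]
        exact (Finset.sum_eq_zero_iff_of_nonneg (fun x _ => hrq x)).mp hsum y (mem_univ y)
      have hqy' : p y ⊓ q y = q y := by linarith
      rw [hqy']
      simp
    · rw [mul_comm, mul_div_assoc, div_self hz]
      ring
  · intro x
    have h2 : (0:ℝ) ≤ (p x - min (p x) (q x)) * (q x - min (p x) (q x)) / (1 - m) :=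
      div_nonneg (mul_nonneg (hrp x) (hrq x)) (by linarith)
    show p x ⊓ q x ≤ (if x = x then p x ⊓ q x else 0) + (p x - p x ⊓ q x) * (q x - p x ⊓ q x) / (1 - m)
    rw [if_pos rfl]
    linarith


open Finset

/-- Chain (Markov) coupling of three couplings along a path of four marginals. -/
lemma chain_coupling {d : ℕ} (p1 p2 p3 p4 : Fin d → ℝ)
    (M1 M2 M3 : Fin d → Fin d → ℝ)
    (hM1 : ∀ x y, 0 ≤ M1 x y) (hM2 : ∀ x y, 0 ≤ M2 x y) (hM3 : ∀ x y, 0 ≤ M3 x y)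
    (hM1r : ∀ x, ∑ y, M1 x y = p1 x) (hM1c : ∀ y, ∑ x, M1 x y = p2 y)
    (hM2r : ∀ x, ∑ y, M2 x y = p2 x) (hM2c : ∀ y, ∑ x, M2 x y = p3 y)
    (hM3r : ∀ x, ∑ y, M3 x y = p3 x) (hM3c : ∀ y, ∑ x, M3 x y = p4 y)
    (hp2s : ∑ x, p2 x = 1) :
    ∃ μ : Fin d → Fin d → Fin d → Fin d → ℝ,
      (∀ y1 y2 y3 y4, 0 ≤ μ y1 y2 y3 y4) ∧
      (∑ y1, ∑ y2, ∑ y3, ∑ y4, μ y1 y2 y3 y4 = 1) ∧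
      (∀ y1 y2, ∑ y3, ∑ y4, μ y1 y2 y3 y4 = M1 y1 y2) ∧
      (∀ y2 y3, ∑ y1, ∑ y4, μ y1 y2 y3 y4 = M2 y2 y3) ∧
      (∀ y3 y4, ∑ y1, ∑ y2, μ y1 y2 y3 y4 = M3 y3 y4) ∧
      (∀ x, p1 x + p4 x - 1 ≤ ∑ y2, ∑ y3, μ x y2 y3 x) := by
  have hp2 : ∀ x, 0 ≤ p2 x := fun x => by
    rw [← hM2r x]; exact Finset.sum_nonneg (fun y _ => hM2 x y)
  have hp3 : ∀ x, 0 ≤ p3 x := fun x => by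
    rw [← hM3r x]; exact Finset.sum_nonneg (fun y _ => hM3 x y)
  have hM1z : ∀ y1 y2, p2 y2 = 0 → M1 y1 y2 = 0 := by
    intro y1 y2 h
    have h1 : M1 y1 y2 ≤ ∑ x, M1 x y2 :=
      Finset.single_le_sum (fun x _ => hM1 x y2) (mem_univ y1)
    rw [hM1c y2, h] at h1
    linarith [hM1 y1 y2]
  have hM2z : ∀ y2 y3, p2 y2 = 0 → M2 y2 y3 = 0 := by
    intro y2 y3 h
    have h1 : M2 y2 y3 ≤ ∑ y, M2 y2 y :=
      Finset.single_le_sum (fun y _ => hM2 y2 y) (mem_univ y3)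
    rw [hM2r y2, h] at h1
    linarith [hM2 y2 y3]
  have hM2z' : ∀ y2 y3, p3 y3 = 0 → M2 y2 y3 = 0 := by
    intro y2 y3 h
    have h1 : M2 y2 y3 ≤ ∑ x, M2 x y3 :=
      Finset.single_le_sum (fun x _ => hM2 x y3) (mem_univ y2)
    rw [hM2c y3, h] at h1
    linarith [hM2 y2 y3]
  have hM3z : ∀ y3 y4, p3 y3 = 0 → M3 y3 y4 = 0 := by
    intro y3 y4 h
    have h1 : M3 y3 y4 ≤ ∑ y, M3 y3 y :=
      Finset.single_le_sum (fun y _ => hM3 y3 y) (mem_univ y4)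
    rw [hM3r y3, h] at h1
    linarith [hM3 y3 y4]
  set μ : Fin d → Fin d → Fin d → Fin d → ℝ :=
    fun y1 y2 y3 y4 => M1 y1 y2 * M2 y2 y3 * M3 y3 y4 / (p2 y2 * p3 y3) with hμ
  have hnn : ∀ y1 y2 y3 y4, 0 ≤ μ y1 y2 y3 y4 := by
    intro y1 y2 y3 y4
    exact div_nonneg (mul_nonneg (mul_nonneg (hM1 y1 y2) (hM2 y2 y3)) (hM3 y3 y4))
      (mul_nonneg (hp2 y2) (hp3 y3))
  -- sum over y4
  have hs4 : ∀ y1 y2 y3, (∑ y4, μ y1 y2 y3 y4) = M1 y1 y2 * (M2 y2 y3 / p2 y2) := by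
    intro y1 y2 y3
    by_cases h3 : p3 y3 = 0
    · simp [hμ, hM2z' y2 y3 h3]
    · have e1 : (∑ y4, μ y1 y2 y3 y4)
          = M1 y1 y2 * M2 y2 y3 * (∑ y4, M3 y3 y4) / (p2 y2 * p3 y3) := by
        rw [Finset.mul_sum, Finset.sum_div]
      rw [e1, hM3r y3]
      by_cases h2 : p2 y2 = 0
      · simp [h2]
      · field_simp
  -- sum over y3 y4
  have hc : ∀ y1 y2, (∑ y3, ∑ y4, μ y1 y2 y3 y4) = M1 y1 y2 := by
    intro y1 y2
    by_cases h2 : p2 y2 = 0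
    · have : ∀ y3, (∑ y4, μ y1 y2 y3 y4) = 0 := by
        intro y3
        rw [hs4 y1 y2 y3, hM2z y2 y3 h2]
        simp
      rw [Finset.sum_congr rfl (fun y3 _ => this y3)]
      simp [hM1z y1 y2 h2]
    · have e1 : (∑ y3, ∑ y4, μ y1 y2 y3 y4) = M1 y1 y2 * ((∑ y3, M2 y2 y3) / p2 y2) := by
        rw [Finset.sum_congr rfl (fun y3 _ => hs4 y1 y2 y3), ← Finset.mul_sum, ← Finset.sum_div]
      rw [e1, hM2r y2, div_self h2, mul_one]
  -- total mass
  have htot : (∑ y1, ∑ y2, ∑ y3, ∑ y4, μ y1 y2 y3 y4) = 1 := by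
    have e1 : (∑ y1, ∑ y2, ∑ y3, ∑ y4, μ y1 y2 y3 y4) = ∑ y1, ∑ y2, M1 y1 y2 := by
      exact Finset.sum_congr rfl (fun y1 _ => Finset.sum_congr rfl (fun y2 _ => hc y1 y2))
    rw [e1, Finset.sum_comm]
    rw [Finset.sum_congr rfl (fun y2 _ => hM1c y2), hp2s]
  -- pair (v2,v3)
  have hd : ∀ y2 y3, (∑ y1, ∑ y4, μ y1 y2 y3 y4) = M2 y2 y3 := by
    intro y2 y3
    have e1 : ∀ y1, (∑ y4, μ y1 y2 y3 y4) = M1 y1 y2 * (M2 y2 y3 / p2 y2) := fun y1 => hs4 y1 y2 y3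
    rw [Finset.sum_congr rfl (fun y1 _ => e1 y1), ← Finset.sum_mul, hM1c y2]
    by_cases h2 : p2 y2 = 0
    · rw [hM2z y2 y3 h2, h2]
      simp
    · field_simp
  -- pair (v3,v4)
  have he : ∀ y3 y4, (∑ y1, ∑ y2, μ y1 y2 y3 y4) = M3 y3 y4 := by
    intro y3 y4
    have e1 : ∀ y2, (∑ y1, μ y1 y2 y3 y4) = M2 y2 y3 * (M3 y3 y4 / p3 y3) := by
      intro y2
      have e2 : (∑ y1, μ y1 y2 y3 y4)
          = (∑ y1, M1 y1 y2) * M2 y2 y3 * M3 y3 y4 / (p2 y2 * p3 y3) := by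
        rw [Finset.sum_mul, Finset.sum_mul, Finset.sum_div]
      rw [e2, hM1c y2]
      by_cases h2 : p2 y2 = 0
      · rw [hM2z y2 y3 h2, h2]
        simp
      · by_cases h3 : p3 y3 = 0
        · simp [h3]
        · field_simp
    -- now sum over y2 ... need to swap order: goal is ∑ y1, ∑ y2 — swap first
    rw [Finset.sum_comm]
    rw [Finset.sum_congr rfl (fun y2 _ => e1 y2), ← Finset.sum_mul, hM2c y3]
    by_cases h3 : p3 y3 = 0
    · rw [hM3z y3 y4 h3, h3]
      simp
    · field_simp
  -- broken pair inequality
  have hf : ∀ x, p1 x + p4 x - 1 ≤ ∑ y2, ∑ y3, μ x y2 y3 x := by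
    intro x
    set u : Fin d → Fin d → ℝ := fun y1 y4 => ∑ y2, ∑ y3, μ y1 y2 y3 y4 with hu
    have hun : ∀ y1 y4, 0 ≤ u y1 y4 := by
      intro y1 y4
      exact Finset.sum_nonneg (fun y2 _ => Finset.sum_nonneg (fun y3 _ => hnn y1 y2 y3 y4))
    have hrow : ∀ y1, (∑ y4, u y1 y4) = p1 y1 := by
      intro y1
      have e1 : (∑ y4, u y1 y4) = ∑ y2, ∑ y3, ∑ y4, μ y1 y2 y3 y4 := by
        rw [hu]
        rw [Finset.sum_comm]
        exact Finset.sum_congr rfl (fun y2 _ => Finset.sum_comm)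
      rw [e1]
      rw [Finset.sum_congr rfl (fun y2 _ => hc y1 y2)]
      exact hM1r y1
    have hcol : ∀ y4, (∑ y1, u y1 y4) = p4 y4 := by
      intro y4
      have e1 : (∑ y1, u y1 y4) = ∑ y3, ∑ y1, ∑ y2, μ y1 y2 y3 y4 := by
        rw [hu]
        have e2 : ∀ y1, (∑ y2, ∑ y3, μ y1 y2 y3 y4) = ∑ y3, ∑ y2, μ y1 y2 y3 y4 :=
          fun y1 => Finset.sum_comm
        rw [Finset.sum_congr rfl (fun y1 _ => e2 y1)]
        exact Finset.sum_comm
      rw [e1]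
      rw [Finset.sum_congr rfl (fun y3 _ => he y3 y4)]
      exact hM3c y4
    have hp1s : (∑ y1, p1 y1) = 1 := by
      calc ∑ y1, p1 y1 = ∑ y1, ∑ y2, M1 y1 y2 :=
            Finset.sum_congr rfl (fun y1 _ => (hM1r y1).symm)
        _ = ∑ y2, ∑ y1, M1 y1 y2 := Finset.sum_comm
        _ = ∑ y2, p2 y2 := Finset.sum_congr rfl (fun y2 _ => hM1c y2)
        _ = 1 := hp2s
    have htot' : (∑ y1, ∑ y4, u y1 y4) = 1 := by
      rw [Finset.sum_congr rfl (fun y1 _ => hrow y1)]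
      exact hp1s
    have e4 : p4 x = u x x + ∑ y1 ∈ univ.erase x, u y1 x := by
      rw [← hcol x, ← Finset.add_sum_erase univ (fun y1 => u y1 x) (mem_univ x)]
    have e5 : (∑ y1 ∈ univ.erase x, u y1 x) ≤ ∑ y1 ∈ univ.erase x, ∑ y4, u y1 y4 :=
      Finset.sum_le_sum (fun y1 _ => Finset.single_le_sum (fun y4 _ => hun y1 y4) (mem_univ x))
    have e6 : (∑ y4, u x y4) + (∑ y1 ∈ univ.erase x, ∑ y4, u y1 y4) = 1 := by
      rw [Finset.add_sum_erase univ (fun y1 => ∑ y4, u y1 y4) (mem_univ x)]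
      exact htot'
    have hux : u x x = ∑ y2, ∑ y3, μ x y2 y3 x := rfl
    have hrx := hrow x
    rw [← hux]
    linarith
  exact ⟨μ, hnn, htot, hc, hd, he, hf⟩

open Finset

section helpers
variable {d : ℕ} (μ : Fin d → Fin d → Fin d → Fin d → ℝ) (x : Fin d) (c : ℝ)

lemma sum4_swap (F : Fin d → Fin d → Fin d → Fin d → Fin d → ℝ) :
    ∑ y1, ∑ y2, ∑ y3, ∑ y4, ∑ z, F y1 y2 y3 y4 z
      = ∑ z, ∑ y1, ∑ y2, ∑ y3, ∑ y4, F y1 y2 y3 y4 z := by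
  calc ∑ y1, ∑ y2, ∑ y3, ∑ y4, ∑ z, F y1 y2 y3 y4 z
      = ∑ y1, ∑ y2, ∑ y3, ∑ z, ∑ y4, F y1 y2 y3 y4 z :=
        Finset.sum_congr rfl (fun y1 _ => Finset.sum_congr rfl (fun y2 _ =>
          Finset.sum_congr rfl (fun y3 _ => Finset.sum_comm)))
    _ = ∑ y1, ∑ y2, ∑ z, ∑ y3, ∑ y4, F y1 y2 y3 y4 z :=
        Finset.sum_congr rfl (fun y1 _ => Finset.sum_congr rfl (fun y2 _ => Finset.sum_comm))
    _ = ∑ y1, ∑ z, ∑ y2, ∑ y3, ∑ y4, F y1 y2 y3 y4 z :=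
        Finset.sum_congr rfl (fun y1 _ => Finset.sum_comm)
    _ = ∑ z, ∑ y1, ∑ y2, ∑ y3, ∑ y4, F y1 y2 y3 y4 z := Finset.sum_comm

lemma sum4_add (f g : Fin d → Fin d → Fin d → Fin d → ℝ) :
    ∑ y1, ∑ y2, ∑ y3, ∑ y4, (f y1 y2 y3 y4 + g y1 y2 y3 y4)
      = (∑ y1, ∑ y2, ∑ y3, ∑ y4, f y1 y2 y3 y4) + ∑ y1, ∑ y2, ∑ y3, ∑ y4, g y1 y2 y3 y4 := by
  simp [Finset.sum_add_distrib]

lemma collapse12 :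
    ∑ y1, ∑ y2, ∑ y3, ∑ y4, μ y1 y2 y3 y4 * (c * (if y1 = x ∧ y2 = x then 1 else 0))
      = c * ∑ y3, ∑ y4, μ x x y3 y4 := by
  simp only [ite_and, mul_ite, ite_mul, mul_zero, zero_mul, mul_one,
    Finset.sum_ite_irrel, Finset.sum_ite_eq', Finset.sum_const_zero, mem_univ, if_true]
  rw [Finset.mul_sum]; refine Finset.sum_congr rfl (fun _ _ => ?_)
  rw [Finset.mul_sum]; refine Finset.sum_congr rfl (fun _ _ => ?_)
  ring

lemma collapse14 :
    ∑ y1, ∑ y2, ∑ y3, ∑ y4, μ y1 y2 y3 y4 * (c * (if y1 = x ∧ y4 = x then 1 else 0))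
      = c * ∑ y2, ∑ y3, μ x y2 y3 x := by
  simp only [ite_and, mul_ite, ite_mul, mul_zero, zero_mul, mul_one,
    Finset.sum_ite_irrel, Finset.sum_ite_eq', Finset.sum_const_zero, mem_univ, if_true]
  rw [Finset.mul_sum]; refine Finset.sum_congr rfl (fun _ _ => ?_)
  rw [Finset.mul_sum]; refine Finset.sum_congr rfl (fun _ _ => ?_)
  ring

lemma collapse32 :
    ∑ y1, ∑ y2, ∑ y3, ∑ y4, μ y1 y2 y3 y4 * (c * (if y3 = x ∧ y2 = x then 1 else 0))
      = c * ∑ y1, ∑ y4, μ y1 x x y4 := by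
  simp only [ite_and, mul_ite, ite_mul, mul_zero, zero_mul, mul_one,
    Finset.sum_ite_irrel, Finset.sum_ite_eq', Finset.sum_const_zero, mem_univ, if_true]
  rw [Finset.mul_sum]; refine Finset.sum_congr rfl (fun _ _ => ?_)
  rw [Finset.mul_sum]; refine Finset.sum_congr rfl (fun _ _ => ?_)
  ring

lemma collapse34 :
    ∑ y1, ∑ y2, ∑ y3, ∑ y4, μ y1 y2 y3 y4 * (c * (if y3 = x ∧ y4 = x then 1 else 0))
      = c * ∑ y1, ∑ y2, μ y1 y2 x x := by
  simp only [ite_and, mul_ite, ite_mul, mul_zero, zero_mul, mul_one,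
    Finset.sum_ite_irrel, Finset.sum_ite_eq', Finset.sum_const_zero, mem_univ, if_true]
  rw [Finset.mul_sum]; refine Finset.sum_congr rfl (fun _ _ => ?_)
  rw [Finset.mul_sum]; refine Finset.sum_congr rfl (fun _ _ => ?_)
  ring

lemma collapse21 :
    ∑ y1, ∑ y2, ∑ y3, ∑ y4, μ y1 y2 y3 y4 * (c * (if y2 = x ∧ y1 = x then 1 else 0))
      = c * ∑ y3, ∑ y4, μ x x y3 y4 := by
  simp only [ite_and, mul_ite, ite_mul, mul_zero, zero_mul, mul_one,
    Finset.sum_ite_irrel, Finset.sum_ite_eq', Finset.sum_const_zero, mem_univ, if_true]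
  rw [Finset.mul_sum]; refine Finset.sum_congr rfl (fun _ _ => ?_)
  rw [Finset.mul_sum]; refine Finset.sum_congr rfl (fun _ _ => ?_)
  ring

lemma collapse41 :
    ∑ y1, ∑ y2, ∑ y3, ∑ y4, μ y1 y2 y3 y4 * (c * (if y4 = x ∧ y1 = x then 1 else 0))
      = c * ∑ y2, ∑ y3, μ x y2 y3 x := by
  simp only [ite_and, mul_ite, ite_mul, mul_zero, zero_mul, mul_one,
    Finset.sum_ite_irrel, Finset.sum_ite_eq', Finset.sum_const_zero, mem_univ, if_true]
  rw [Finset.mul_sum]; refine Finset.sum_congr rfl (fun _ _ => ?_)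
  rw [Finset.mul_sum]; refine Finset.sum_congr rfl (fun _ _ => ?_)
  ring

lemma collapse23 :
    ∑ y1, ∑ y2, ∑ y3, ∑ y4, μ y1 y2 y3 y4 * (c * (if y2 = x ∧ y3 = x then 1 else 0))
      = c * ∑ y1, ∑ y4, μ y1 x x y4 := by
  simp only [ite_and, mul_ite, ite_mul, mul_zero, zero_mul, mul_one,
    Finset.sum_ite_irrel, Finset.sum_ite_eq', Finset.sum_const_zero, mem_univ, if_true]
  rw [Finset.mul_sum]; refine Finset.sum_congr rfl (fun _ _ => ?_)
  rw [Finset.mul_sum]; refine Finset.sum_congr rfl (fun _ _ => ?_)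
  ring

lemma collapse43 :
    ∑ y1, ∑ y2, ∑ y3, ∑ y4, μ y1 y2 y3 y4 * (c * (if y4 = x ∧ y3 = x then 1 else 0))
      = c * ∑ y1, ∑ y2, μ y1 y2 x x := by
  simp only [ite_and, mul_ite, ite_mul, mul_zero, zero_mul, mul_one,
    Finset.sum_ite_irrel, Finset.sum_ite_eq', Finset.sum_const_zero, mem_univ, if_true]
  rw [Finset.mul_sum]; refine Finset.sum_congr rfl (fun _ _ => ?_)
  rw [Finset.mul_sum]; refine Finset.sum_congr rfl (fun _ _ => ?_)
  ring

end helpers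

lemma broken_bound (s t v : ℝ) (h0 : 0 ≤ v) (h1 : s + t - 1 ≤ v) : min s t - 1/2 ≤ v := by
  rcases le_or_gt (1/2 : ℝ) (min s t) with h | h
  · have hs := min_le_left s t
    have ht := min_le_right s t
    linarith
  · linarith

lemma sum4_mul_const {d : ℕ} (f : Fin d → Fin d → Fin d → Fin d → ℝ) (c : ℝ) :
    ∑ y1, ∑ y2, ∑ y3, ∑ y4, f y1 y2 y3 y4 * c
      = (∑ y1, ∑ y2, ∑ y3, ∑ y4, f y1 y2 y3 y4) * c := by
  rw [Finset.sum_mul]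
  refine Finset.sum_congr rfl fun y1 _ => ?_
  rw [Finset.sum_mul]
  refine Finset.sum_congr rfl fun y2 _ => ?_
  rw [Finset.sum_mul]
  refine Finset.sum_congr rfl fun y3 _ => ?_
  rw [Finset.sum_mul]

lemma sum4_exp_le {d : ℕ} (μ V : Fin d → Fin d → Fin d → Fin d → ℝ) (c : ℝ)
    (hn : ∀ y1 y2 y3 y4, 0 ≤ μ y1 y2 y3 y4)
    (ht : ∑ y1, ∑ y2, ∑ y3, ∑ y4, μ y1 y2 y3 y4 = 1)
    (hV : ∀ y1 y2 y3 y4, V y1 y2 y3 y4 ≤ c) :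
    ∑ y1, ∑ y2, ∑ y3, ∑ y4, μ y1 y2 y3 y4 * V y1 y2 y3 y4 ≤ c := by
  have h1 : ∑ y1, ∑ y2, ∑ y3, ∑ y4, μ y1 y2 y3 y4 * V y1 y2 y3 y4
      ≤ ∑ y1, ∑ y2, ∑ y3, ∑ y4, μ y1 y2 y3 y4 * c := by
    refine Finset.sum_le_sum fun y1 _ => Finset.sum_le_sum fun y2 _ =>
      Finset.sum_le_sum fun y3 _ => Finset.sum_le_sum fun y4 _ => ?_
    exact mul_le_mul_of_nonneg_left (hV y1 y2 y3 y4) (hn y1 y2 y3 y4)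
  rw [sum4_mul_const, ht, one_mul] at h1
  exact h1

/-- For a distribution on [d] × {0,1} × {0,1} with d > 2, the winning probability
of any no-signaling strategy is at most min{2·p_c, p_c + 1/8}, where p_c is the
optimal classical simultaneous guessing probability. -/
theorem ns_le_classical_bound (d : ℕ) (hd : 2 < d)
    (P : Fin d → Fin 2 → Fin 2 → ℝ)
    (hP0 : ∀ x a b, 0 ≤ P x a b)
    (hP1 : ∑ x, ∑ a, ∑ b, P x a b = 1)
    (pc : ℝ)
    (hpc : IsGreatest {p : ℝ | ∃ f g : Fin 2 → Fin d,
        p = ∑ x, ∑ a, ∑ b, P x a b * (if f a = x ∧ g b = x then 1 else 0)} pc)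
    (Q : Fin d → Fin d → Fin 2 → Fin 2 → ℝ)
    (hQ0 : ∀ xA xB a b, 0 ≤ Q xA xB a b)
    (hQ1 : ∀ a b, ∑ xA, ∑ xB, Q xA xB a b = 1)
    (hQnsA : ∀ xB a a' b, ∑ xA, Q xA xB a b = ∑ xA, Q xA xB a' b)
    (hQnsB : ∀ xA a b b', ∑ xB, Q xA xB a b = ∑ xB, Q xA xB a b') :
    (∑ x, ∑ a, ∑ b, P x a b * Q x x a b) ≤ min (2 * pc) (pc + 1/8) := by
  classical
  -- marginals
  set A : Fin d → Fin 2 → ℝ := fun x a => ∑ y, Q x y a 0 with hAdef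
  set Bv : Fin d → Fin 2 → ℝ := fun x b => ∑ y, Q y x 0 b with hBdef
  have hA0 : ∀ x a, 0 ≤ A x a := fun x a => Finset.sum_nonneg fun y _ => hQ0 x y a 0
  have hB0 : ∀ x b, 0 ≤ Bv x b := fun x b => Finset.sum_nonneg fun y _ => hQ0 y x 0 b
  have hAs : ∀ a, ∑ x, A x a = 1 := fun a => hQ1 a 0
  have hBs : ∀ b, ∑ x, Bv x b = 1 := fun b => by
    rw [hBdef]
    rw [Finset.sum_comm]
    exact hQ1 0 b
  have hQA : ∀ x a b, Q x x a b ≤ A x a := by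
    intro x a b
    have h1 : Q x x a b ≤ ∑ y, Q x y a b :=
      Finset.single_le_sum (fun y _ => hQ0 x y a b) (Finset.mem_univ x)
    rw [hQnsB x a b 0] at h1
    exact h1
  have hQB : ∀ x a b, Q x x a b ≤ Bv x b := by
    intro x a b
    have h1 : Q x x a b ≤ ∑ y, Q y x a b :=
      Finset.single_le_sum (fun y _ => hQ0 y x a b) (Finset.mem_univ x)
    rw [hQnsA x a 0 b] at h1
    exact h1
  -- classical strategy values
  have hval : ∀ f g : Fin 2 → Fin d,
      (∑ x, ∑ a, ∑ b, P x a b * (if f a = x ∧ g b = x then 1 else 0)) ≤ pc :=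
    fun f g => hpc.2 ⟨f, g, rfl⟩
  have hconst : ∀ x0 : Fin d, P x0 0 0 + P x0 0 1 + P x0 1 0 + P x0 1 1 ≤ pc := by
    intro x0
    have h := hval (fun _ => x0) (fun _ => x0)
    have e : (∑ x, ∑ a, ∑ b, P x a b * (if x0 = x ∧ x0 = x then 1 else 0))
        = ∑ x, (if x0 = x then (∑ a, ∑ b, P x a b) else 0) := by
      refine Finset.sum_congr rfl fun x _ => ?_
      by_cases hx : x0 = x
      · simp [hx]
      · simp [hx]
    rw [e] at h
    rw [Finset.sum_ite_eq Finset.univ x0 (fun x => ∑ a, ∑ b, P x a b)] at h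
    simp only [Finset.mem_univ, if_true, Fin.sum_univ_two] at h
    linarith
  have hpc0 : 0 ≤ pc := by
    have hd0 : (0 : ℕ) < d := by omega
    have h := hconst ⟨0, hd0⟩
    have h0 := hP0 ⟨0, hd0⟩ 0 0
    have h1 := hP0 ⟨0, hd0⟩ 0 1
    have h2 := hP0 ⟨0, hd0⟩ 1 0
    have h3 := hP0 ⟨0, hd0⟩ 1 1
    linarith
  -- Bound 1 : ω ≤ 2 pc
  have bound1 : (∑ x, ∑ a, ∑ b, P x a b * Q x x a b) ≤ 2 * pc := by
    have step1 : (∑ x, ∑ a, ∑ b, P x a b * Q x x a b)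
        ≤ ∑ x, ∑ a, ∑ b, P x a b * Bv x b := by
      refine Finset.sum_le_sum fun x _ => Finset.sum_le_sum fun a _ =>
        Finset.sum_le_sum fun b _ => ?_
      exact mul_le_mul_of_nonneg_left (hQB x a b) (hP0 x a b)
    have step2 : (∑ x, ∑ a, ∑ b, P x a b * Bv x b)
        = ∑ b, ∑ x, (P x 0 b + P x 1 b) * Bv x b := by
      calc (∑ x, ∑ a, ∑ b, P x a b * Bv x b)
          = ∑ x, ∑ b, ∑ a, P x a b * Bv x b :=
            Finset.sum_congr rfl fun x _ => Finset.sum_comm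
        _ = ∑ x, ∑ b, (P x 0 b + P x 1 b) * Bv x b := by
            refine Finset.sum_congr rfl fun x _ => Finset.sum_congr rfl fun b _ => ?_
            rw [Fin.sum_univ_two, add_mul]
        _ = ∑ b, ∑ x, (P x 0 b + P x 1 b) * Bv x b := Finset.sum_comm
    have step3 : ∀ b, (∑ x, (P x 0 b + P x 1 b) * Bv x b) ≤ pc := by
      intro b
      have hx : ∀ x, (P x 0 b + P x 1 b) * Bv x b ≤ pc * Bv x b := by
        intro x
        refine mul_le_mul_of_nonneg_right ?_ (hB0 x b)
        have hb : P x 0 b + P x 1 b ≤ P x 0 0 + P x 0 1 + P x 1 0 + P x 1 1 := by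
          fin_cases b
          · have := hP0 x 0 1; have := hP0 x 1 1; simp; linarith
          · have := hP0 x 0 0; have := hP0 x 1 0; simp; linarith
        linarith [hconst x]
      calc (∑ x, (P x 0 b + P x 1 b) * Bv x b) ≤ ∑ x, pc * Bv x b :=
            Finset.sum_le_sum fun x _ => hx x
        _ = pc * ∑ x, Bv x b := by rw [Finset.mul_sum]
        _ = pc := by rw [hBs b, mul_one]
    calc (∑ x, ∑ a, ∑ b, P x a b * Q x x a b)
        ≤ ∑ b, ∑ x, (P x 0 b + P x 1 b) * Bv x b := step2 ▸ step1
      _ ≤ ∑ _b : Fin 2, pc := Finset.sum_le_sum fun b _ => step3 b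
      _ = 2 * pc := by rw [Fin.sum_univ_two]; ring

  have bound2 : (∑ x, ∑ a, ∑ b, P x a b * Q x x a b) ≤ pc + 1/8 := by
    obtain ⟨C1, hC1n, hC1r, hC1c, hC1d⟩ :=
      maximal_coupling (fun x => A x 0) (fun x => Bv x 0)
        (fun x => hA0 x 0) (fun x => hB0 x 0) (hAs 0) (hBs 0)
    obtain ⟨C2, hC2n, hC2r, hC2c, hC2d⟩ :=
      maximal_coupling (fun x => Bv x 0) (fun x => A x 1)
        (fun x => hB0 x 0) (fun x => hA0 x 1) (hBs 0) (hAs 1)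
    obtain ⟨C3, hC3n, hC3r, hC3c, hC3d⟩ :=
      maximal_coupling (fun x => A x 1) (fun x => Bv x 1)
        (fun x => hA0 x 1) (fun x => hB0 x 1) (hAs 1) (hBs 1)
    obtain ⟨C4, hC4n, hC4r, hC4c, hC4d⟩ :=
      maximal_coupling (fun x => Bv x 1) (fun x => A x 0)
        (fun x => hB0 x 1) (fun x => hA0 x 0) (hBs 1) (hAs 0)
    obtain ⟨μ1, h1n, h1tot, h1u, h1v, h1w, h1f⟩ :=
      chain_coupling (fun x => A x 0) (fun x => Bv x 0) (fun x => A x 1) (fun x => Bv x 1)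
        C1 C2 C3 hC1n hC2n hC3n hC1r hC1c hC2r hC2c hC3r hC3c (hBs 0)
    obtain ⟨μ2, h2n, h2tot, h2u, h2v, h2w, h2f⟩ :=
      chain_coupling (fun x => Bv x 0) (fun x => A x 1) (fun x => Bv x 1) (fun x => A x 0)
        C2 C3 C4 hC2n hC3n hC4n hC2r hC2c hC3r hC3c hC4r hC4c (hAs 1)
    obtain ⟨μ3, h3n, h3tot, h3u, h3v, h3w, h3f⟩ :=
      chain_coupling (fun x => A x 1) (fun x => Bv x 1) (fun x => A x 0) (fun x => Bv x 0)
        C3 C4 C1 hC3n hC4n hC1n hC3r hC3c hC4r hC4c hC1r hC1c (hBs 1)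
    obtain ⟨μ4, h4n, h4tot, h4u, h4v, h4w, h4f⟩ :=
      chain_coupling (fun x => Bv x 1) (fun x => A x 0) (fun x => Bv x 0) (fun x => A x 1)
        C4 C1 C2 hC4n hC1n hC2n hC4r hC4c hC1r hC1c hC2r hC2c (hAs 0)
    -- Rotation 1 : roles (y1,y2,y3,y4) = (f0,g0,f1,g1)
    have hE1le : (∑ y1, ∑ y2, ∑ y3, ∑ y4, μ1 y1 y2 y3 y4 *
        (∑ x, ∑ a, ∑ b, P x a b * (if (![y1, y3]) a = x ∧ (![y2, y4]) b = x then 1 else 0)))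
        ≤ pc := by
      refine sum4_exp_le μ1 _ pc h1n h1tot fun y1 y2 y3 y4 => hval ![y1, y3] ![y2, y4]
    have hE1eq : (∑ y1, ∑ y2, ∑ y3, ∑ y4, μ1 y1 y2 y3 y4 *
        (∑ x, ∑ a, ∑ b, P x a b * (if (![y1, y3]) a = x ∧ (![y2, y4]) b = x then 1 else 0)))
        = ∑ x, (P x 0 0 * (∑ y3, ∑ y4, μ1 x x y3 y4)
            + (P x 0 1 * (∑ y2, ∑ y3, μ1 x y2 y3 x)
            + (P x 1 0 * (∑ y1, ∑ y4, μ1 y1 x x y4)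
            + P x 1 1 * (∑ y1, ∑ y2, μ1 y1 y2 x x)))) := by
      have hexp : ∀ y1 y2 y3 y4 : Fin d,
          (∑ x, ∑ a, ∑ b, P x a b * (if (![y1, y3]) a = x ∧ (![y2, y4]) b = x then 1 else 0))
          = ∑ x, (P x 0 0 * (if y1 = x ∧ y2 = x then 1 else 0)
              + (P x 0 1 * (if y1 = x ∧ y4 = x then 1 else 0)
              + (P x 1 0 * (if y3 = x ∧ y2 = x then 1 else 0)
              + P x 1 1 * (if y3 = x ∧ y4 = x then 1 else 0)))) := by
        intro y1 y2 y3 y4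
        refine Finset.sum_congr rfl fun x _ => ?_
        rw [Fin.sum_univ_two, Fin.sum_univ_two, Fin.sum_univ_two]
        simp only [Matrix.cons_val_zero, Matrix.cons_val_one, Matrix.head_cons]
        simp only [add_assoc]; rfl
      calc (∑ y1, ∑ y2, ∑ y3, ∑ y4, μ1 y1 y2 y3 y4 *
          (∑ x, ∑ a, ∑ b, P x a b * (if (![y1, y3]) a = x ∧ (![y2, y4]) b = x then 1 else 0)))
          = ∑ y1, ∑ y2, ∑ y3, ∑ y4, ∑ x, μ1 y1 y2 y3 y4 *
              (P x 0 0 * (if y1 = x ∧ y2 = x then 1 else 0)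
              + (P x 0 1 * (if y1 = x ∧ y4 = x then 1 else 0)
              + (P x 1 0 * (if y3 = x ∧ y2 = x then 1 else 0)
              + P x 1 1 * (if y3 = x ∧ y4 = x then 1 else 0)))) := by
            refine Finset.sum_congr rfl fun y1 _ => Finset.sum_congr rfl fun y2 _ =>
              Finset.sum_congr rfl fun y3 _ => Finset.sum_congr rfl fun y4 _ => ?_
            rw [hexp y1 y2 y3 y4, Finset.mul_sum]
        _ = ∑ x, ∑ y1, ∑ y2, ∑ y3, ∑ y4, μ1 y1 y2 y3 y4 *
              (P x 0 0 * (if y1 = x ∧ y2 = x then 1 else 0)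
              + (P x 0 1 * (if y1 = x ∧ y4 = x then 1 else 0)
              + (P x 1 0 * (if y3 = x ∧ y2 = x then 1 else 0)
              + P x 1 1 * (if y3 = x ∧ y4 = x then 1 else 0)))) :=
            sum4_swap _
        _ = ∑ x, (P x 0 0 * (∑ y3, ∑ y4, μ1 x x y3 y4)
            + (P x 0 1 * (∑ y2, ∑ y3, μ1 x y2 y3 x)
            + (P x 1 0 * (∑ y1, ∑ y4, μ1 y1 x x y4)
            + P x 1 1 * (∑ y1, ∑ y2, μ1 y1 y2 x x)))) := by
            refine Finset.sum_congr rfl fun x _ => ?_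
            simp only [mul_add]
            rw [sum4_add, sum4_add, sum4_add]
            rw [collapse12 μ1 x (P x 0 0), collapse14 μ1 x (P x 0 1),
              collapse32 μ1 x (P x 1 0), collapse34 μ1 x (P x 1 1)]
    have hE1ge : (∑ x, (P x 0 0 * min (A x 0) (Bv x 0)
            + (P x 0 1 * (min (A x 0) (Bv x 1) - 1/2)
            + (P x 1 0 * min (Bv x 0) (A x 1)
            + P x 1 1 * min (A x 1) (Bv x 1))))) ≤ pc := by
      refine le_trans (Finset.sum_le_sum fun x _ => ?_) (le_of_eq_of_le hE1eq.symm hE1le)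
      have e1 : min (A x 0) (Bv x 0) ≤ ∑ y3, ∑ y4, μ1 x x y3 y4 := by
        rw [h1u x x]; exact hC1d x
      have e2 : min (A x 0) (Bv x 1) - 1/2 ≤ ∑ y2, ∑ y3, μ1 x y2 y3 x := by
        refine broken_bound _ _ _ ?_ (h1f x)
        exact Finset.sum_nonneg fun y2 _ => Finset.sum_nonneg fun y3 _ => h1n x y2 y3 x
      have e3 : min (Bv x 0) (A x 1) ≤ ∑ y1, ∑ y4, μ1 y1 x x y4 := by
        rw [h1v x x]; exact hC2d x
      have e4 : min (A x 1) (Bv x 1) ≤ ∑ y1, ∑ y2, μ1 y1 y2 x x := by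
        rw [h1w x x]; exact hC3d x
      have m1 := mul_le_mul_of_nonneg_left e1 (hP0 x 0 0)
      have m2 := mul_le_mul_of_nonneg_left e2 (hP0 x 0 1)
      have m3 := mul_le_mul_of_nonneg_left e3 (hP0 x 1 0)
      have m4 := mul_le_mul_of_nonneg_left e4 (hP0 x 1 1)
      linarith

    have hE2le : (∑ y1, ∑ y2, ∑ y3, ∑ y4, μ2 y1 y2 y3 y4 *
        (∑ x, ∑ a, ∑ b, P x a b * (if (![y4, y2]) a = x ∧ (![y1, y3]) b = x then 1 else 0)))
        ≤ pc := by
      refine sum4_exp_le μ2 _ pc h2n h2tot fun y1 y2 y3 y4 => hval ![y4, y2] ![y1, y3]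
    have hE2eq : (∑ y1, ∑ y2, ∑ y3, ∑ y4, μ2 y1 y2 y3 y4 *
        (∑ x, ∑ a, ∑ b, P x a b * (if (![y4, y2]) a = x ∧ (![y1, y3]) b = x then 1 else 0)))
        = ∑ x, (P x 0 0 * (∑ y2, ∑ y3, μ2 x y2 y3 x)
            + (P x 0 1 * (∑ y1, ∑ y2, μ2 y1 y2 x x)
            + (P x 1 0 * (∑ y3, ∑ y4, μ2 x x y3 y4)
            + P x 1 1 * (∑ y1, ∑ y4, μ2 y1 x x y4)))) := by
      have hexp : ∀ y1 y2 y3 y4 : Fin d,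
          (∑ x, ∑ a, ∑ b, P x a b * (if (![y4, y2]) a = x ∧ (![y1, y3]) b = x then 1 else 0))
          = ∑ x, (P x 0 0 * (if y4 = x ∧ y1 = x then 1 else 0)
              + (P x 0 1 * (if y4 = x ∧ y3 = x then 1 else 0)
              + (P x 1 0 * (if y2 = x ∧ y1 = x then 1 else 0)
              + P x 1 1 * (if y2 = x ∧ y3 = x then 1 else 0)))) := by
        intro y1 y2 y3 y4
        refine Finset.sum_congr rfl fun x _ => ?_
        rw [Fin.sum_univ_two, Fin.sum_univ_two, Fin.sum_univ_two]
        simp only [Matrix.cons_val_zero, Matrix.cons_val_one, Matrix.head_cons]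
        simp only [add_assoc]; rfl
      calc (∑ y1, ∑ y2, ∑ y3, ∑ y4, μ2 y1 y2 y3 y4 *
          (∑ x, ∑ a, ∑ b, P x a b * (if (![y4, y2]) a = x ∧ (![y1, y3]) b = x then 1 else 0)))
          = ∑ y1, ∑ y2, ∑ y3, ∑ y4, ∑ x, μ2 y1 y2 y3 y4 *
              (P x 0 0 * (if y4 = x ∧ y1 = x then 1 else 0)
              + (P x 0 1 * (if y4 = x ∧ y3 = x then 1 else 0)
              + (P x 1 0 * (if y2 = x ∧ y1 = x then 1 else 0)
              + P x 1 1 * (if y2 = x ∧ y3 = x then 1 else 0)))) := by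
            refine Finset.sum_congr rfl fun y1 _ => Finset.sum_congr rfl fun y2 _ =>
              Finset.sum_congr rfl fun y3 _ => Finset.sum_congr rfl fun y4 _ => ?_
            rw [hexp y1 y2 y3 y4, Finset.mul_sum]
        _ = ∑ x, ∑ y1, ∑ y2, ∑ y3, ∑ y4, μ2 y1 y2 y3 y4 *
              (P x 0 0 * (if y4 = x ∧ y1 = x then 1 else 0)
              + (P x 0 1 * (if y4 = x ∧ y3 = x then 1 else 0)
              + (P x 1 0 * (if y2 = x ∧ y1 = x then 1 else 0)
              + P x 1 1 * (if y2 = x ∧ y3 = x then 1 else 0)))) :=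
            sum4_swap _
        _ = ∑ x, (P x 0 0 * (∑ y2, ∑ y3, μ2 x y2 y3 x)
            + (P x 0 1 * (∑ y1, ∑ y2, μ2 y1 y2 x x)
            + (P x 1 0 * (∑ y3, ∑ y4, μ2 x x y3 y4)
            + P x 1 1 * (∑ y1, ∑ y4, μ2 y1 x x y4)))) := by
            refine Finset.sum_congr rfl fun x _ => ?_
            simp only [mul_add]
            rw [sum4_add, sum4_add, sum4_add]
            rw [collapse41 μ2 x (P x 0 0), collapse43 μ2 x (P x 0 1),
              collapse21 μ2 x (P x 1 0), collapse23 μ2 x (P x 1 1)]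
    have hE2ge : (∑ x, (P x 0 0 * (min (Bv x 0) (A x 0) - 1/2)
            + (P x 0 1 * (min (Bv x 1) (A x 0))
            + (P x 1 0 * (min (Bv x 0) (A x 1))
            + P x 1 1 * (min (A x 1) (Bv x 1)))))) ≤ pc := by
      refine le_trans (Finset.sum_le_sum fun x _ => ?_) (le_of_eq_of_le hE2eq.symm hE2le)
      have e1 : (min (Bv x 0) (A x 0) - 1/2) ≤ ∑ y2, ∑ y3, μ2 x y2 y3 x := by
        refine broken_bound _ _ _ ?_ (h2f x)
        exact Finset.sum_nonneg fun y2 _ => Finset.sum_nonneg fun y3 _ => h2n x y2 y3 x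
      have e2 : (min (Bv x 1) (A x 0)) ≤ ∑ y1, ∑ y2, μ2 y1 y2 x x := by
        rw [h2w x x]; exact hC4d x
      have e3 : (min (Bv x 0) (A x 1)) ≤ ∑ y3, ∑ y4, μ2 x x y3 y4 := by
        rw [h2u x x]; exact hC2d x
      have e4 : (min (A x 1) (Bv x 1)) ≤ ∑ y1, ∑ y4, μ2 y1 x x y4 := by
        rw [h2v x x]; exact hC3d x
      have m1 := mul_le_mul_of_nonneg_left e1 (hP0 x 0 0)
      have m2 := mul_le_mul_of_nonneg_left e2 (hP0 x 0 1)
      have m3 := mul_le_mul_of_nonneg_left e3 (hP0 x 1 0)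
      have m4 := mul_le_mul_of_nonneg_left e4 (hP0 x 1 1)
      linarith

    have hE3le : (∑ y1, ∑ y2, ∑ y3, ∑ y4, μ3 y1 y2 y3 y4 *
        (∑ x, ∑ a, ∑ b, P x a b * (if (![y3, y1]) a = x ∧ (![y4, y2]) b = x then 1 else 0)))
        ≤ pc := by
      refine sum4_exp_le μ3 _ pc h3n h3tot fun y1 y2 y3 y4 => hval ![y3, y1] ![y4, y2]
    have hE3eq : (∑ y1, ∑ y2, ∑ y3, ∑ y4, μ3 y1 y2 y3 y4 *
        (∑ x, ∑ a, ∑ b, P x a b * (if (![y3, y1]) a = x ∧ (![y4, y2]) b = x then 1 else 0)))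
        = ∑ x, (P x 0 0 * (∑ y1, ∑ y2, μ3 y1 y2 x x)
            + (P x 0 1 * (∑ y1, ∑ y4, μ3 y1 x x y4)
            + (P x 1 0 * (∑ y2, ∑ y3, μ3 x y2 y3 x)
            + P x 1 1 * (∑ y3, ∑ y4, μ3 x x y3 y4)))) := by
      have hexp : ∀ y1 y2 y3 y4 : Fin d,
          (∑ x, ∑ a, ∑ b, P x a b * (if (![y3, y1]) a = x ∧ (![y4, y2]) b = x then 1 else 0))
          = ∑ x, (P x 0 0 * (if y3 = x ∧ y4 = x then 1 else 0)
              + (P x 0 1 * (if y3 = x ∧ y2 = x then 1 else 0)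
              + (P x 1 0 * (if y1 = x ∧ y4 = x then 1 else 0)
              + P x 1 1 * (if y1 = x ∧ y2 = x then 1 else 0)))) := by
        intro y1 y2 y3 y4
        refine Finset.sum_congr rfl fun x _ => ?_
        rw [Fin.sum_univ_two, Fin.sum_univ_two, Fin.sum_univ_two]
        simp only [Matrix.cons_val_zero, Matrix.cons_val_one, Matrix.head_cons]
        simp only [add_assoc]; rfl
      calc (∑ y1, ∑ y2, ∑ y3, ∑ y4, μ3 y1 y2 y3 y4 *
          (∑ x, ∑ a, ∑ b, P x a b * (if (![y3, y1]) a = x ∧ (![y4, y2]) b = x then 1 else 0)))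
          = ∑ y1, ∑ y2, ∑ y3, ∑ y4, ∑ x, μ3 y1 y2 y3 y4 *
              (P x 0 0 * (if y3 = x ∧ y4 = x then 1 else 0)
              + (P x 0 1 * (if y3 = x ∧ y2 = x then 1 else 0)
              + (P x 1 0 * (if y1 = x ∧ y4 = x then 1 else 0)
              + P x 1 1 * (if y1 = x ∧ y2 = x then 1 else 0)))) := by
            refine Finset.sum_congr rfl fun y1 _ => Finset.sum_congr rfl fun y2 _ =>
              Finset.sum_congr rfl fun y3 _ => Finset.sum_congr rfl fun y4 _ => ?_
            rw [hexp y1 y2 y3 y4, Finset.mul_sum]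
        _ = ∑ x, ∑ y1, ∑ y2, ∑ y3, ∑ y4, μ3 y1 y2 y3 y4 *
              (P x 0 0 * (if y3 = x ∧ y4 = x then 1 else 0)
              + (P x 0 1 * (if y3 = x ∧ y2 = x then 1 else 0)
              + (P x 1 0 * (if y1 = x ∧ y4 = x then 1 else 0)
              + P x 1 1 * (if y1 = x ∧ y2 = x then 1 else 0)))) :=
            sum4_swap _
        _ = ∑ x, (P x 0 0 * (∑ y1, ∑ y2, μ3 y1 y2 x x)
            + (P x 0 1 * (∑ y1, ∑ y4, μ3 y1 x x y4)
            + (P x 1 0 * (∑ y2, ∑ y3, μ3 x y2 y3 x)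
            + P x 1 1 * (∑ y3, ∑ y4, μ3 x x y3 y4)))) := by
            refine Finset.sum_congr rfl fun x _ => ?_
            simp only [mul_add]
            rw [sum4_add, sum4_add, sum4_add]
            rw [collapse34 μ3 x (P x 0 0), collapse32 μ3 x (P x 0 1),
              collapse14 μ3 x (P x 1 0), collapse12 μ3 x (P x 1 1)]
    have hE3ge : (∑ x, (P x 0 0 * (min (A x 0) (Bv x 0))
            + (P x 0 1 * (min (Bv x 1) (A x 0))
            + (P x 1 0 * (min (A x 1) (Bv x 0) - 1/2)
            + P x 1 1 * (min (A x 1) (Bv x 1)))))) ≤ pc := by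
      refine le_trans (Finset.sum_le_sum fun x _ => ?_) (le_of_eq_of_le hE3eq.symm hE3le)
      have e1 : (min (A x 0) (Bv x 0)) ≤ ∑ y1, ∑ y2, μ3 y1 y2 x x := by
        rw [h3w x x]; exact hC1d x
      have e2 : (min (Bv x 1) (A x 0)) ≤ ∑ y1, ∑ y4, μ3 y1 x x y4 := by
        rw [h3v x x]; exact hC4d x
      have e3 : (min (A x 1) (Bv x 0) - 1/2) ≤ ∑ y2, ∑ y3, μ3 x y2 y3 x := by
        refine broken_bound _ _ _ ?_ (h3f x)
        exact Finset.sum_nonneg fun y2 _ => Finset.sum_nonneg fun y3 _ => h3n x y2 y3 x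
      have e4 : (min (A x 1) (Bv x 1)) ≤ ∑ y3, ∑ y4, μ3 x x y3 y4 := by
        rw [h3u x x]; exact hC3d x
      have m1 := mul_le_mul_of_nonneg_left e1 (hP0 x 0 0)
      have m2 := mul_le_mul_of_nonneg_left e2 (hP0 x 0 1)
      have m3 := mul_le_mul_of_nonneg_left e3 (hP0 x 1 0)
      have m4 := mul_le_mul_of_nonneg_left e4 (hP0 x 1 1)
      linarith

    have hE4le : (∑ y1, ∑ y2, ∑ y3, ∑ y4, μ4 y1 y2 y3 y4 *
        (∑ x, ∑ a, ∑ b, P x a b * (if (![y2, y4]) a = x ∧ (![y3, y1]) b = x then 1 else 0)))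
        ≤ pc := by
      refine sum4_exp_le μ4 _ pc h4n h4tot fun y1 y2 y3 y4 => hval ![y2, y4] ![y3, y1]
    have hE4eq : (∑ y1, ∑ y2, ∑ y3, ∑ y4, μ4 y1 y2 y3 y4 *
        (∑ x, ∑ a, ∑ b, P x a b * (if (![y2, y4]) a = x ∧ (![y3, y1]) b = x then 1 else 0)))
        = ∑ x, (P x 0 0 * (∑ y1, ∑ y4, μ4 y1 x x y4)
            + (P x 0 1 * (∑ y3, ∑ y4, μ4 x x y3 y4)
            + (P x 1 0 * (∑ y1, ∑ y2, μ4 y1 y2 x x)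
            + P x 1 1 * (∑ y2, ∑ y3, μ4 x y2 y3 x)))) := by
      have hexp : ∀ y1 y2 y3 y4 : Fin d,
          (∑ x, ∑ a, ∑ b, P x a b * (if (![y2, y4]) a = x ∧ (![y3, y1]) b = x then 1 else 0))
          = ∑ x, (P x 0 0 * (if y2 = x ∧ y3 = x then 1 else 0)
              + (P x 0 1 * (if y2 = x ∧ y1 = x then 1 else 0)
              + (P x 1 0 * (if y4 = x ∧ y3 = x then 1 else 0)
              + P x 1 1 * (if y4 = x ∧ y1 = x then 1 else 0)))) := by
        intro y1 y2 y3 y4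
        refine Finset.sum_congr rfl fun x _ => ?_
        rw [Fin.sum_univ_two, Fin.sum_univ_two, Fin.sum_univ_two]
        simp only [Matrix.cons_val_zero, Matrix.cons_val_one, Matrix.head_cons]
        simp only [add_assoc]; rfl
      calc (∑ y1, ∑ y2, ∑ y3, ∑ y4, μ4 y1 y2 y3 y4 *
          (∑ x, ∑ a, ∑ b, P x a b * (if (![y2, y4]) a = x ∧ (![y3, y1]) b = x then 1 else 0)))
          = ∑ y1, ∑ y2, ∑ y3, ∑ y4, ∑ x, μ4 y1 y2 y3 y4 *
              (P x 0 0 * (if y2 = x ∧ y3 = x then 1 else 0)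
              + (P x 0 1 * (if y2 = x ∧ y1 = x then 1 else 0)
              + (P x 1 0 * (if y4 = x ∧ y3 = x then 1 else 0)
              + P x 1 1 * (if y4 = x ∧ y1 = x then 1 else 0)))) := by
            refine Finset.sum_congr rfl fun y1 _ => Finset.sum_congr rfl fun y2 _ =>
              Finset.sum_congr rfl fun y3 _ => Finset.sum_congr rfl fun y4 _ => ?_
            rw [hexp y1 y2 y3 y4, Finset.mul_sum]
        _ = ∑ x, ∑ y1, ∑ y2, ∑ y3, ∑ y4, μ4 y1 y2 y3 y4 *
              (P x 0 0 * (if y2 = x ∧ y3 = x then 1 else 0)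
              + (P x 0 1 * (if y2 = x ∧ y1 = x then 1 else 0)
              + (P x 1 0 * (if y4 = x ∧ y3 = x then 1 else 0)
              + P x 1 1 * (if y4 = x ∧ y1 = x then 1 else 0)))) :=
            sum4_swap _
        _ = ∑ x, (P x 0 0 * (∑ y1, ∑ y4, μ4 y1 x x y4)
            + (P x 0 1 * (∑ y3, ∑ y4, μ4 x x y3 y4)
            + (P x 1 0 * (∑ y1, ∑ y2, μ4 y1 y2 x x)
            + P x 1 1 * (∑ y2, ∑ y3, μ4 x y2 y3 x)))) := by
            refine Finset.sum_congr rfl fun x _ => ?_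
            simp only [mul_add]
            rw [sum4_add, sum4_add, sum4_add]
            rw [collapse23 μ4 x (P x 0 0), collapse21 μ4 x (P x 0 1),
              collapse43 μ4 x (P x 1 0), collapse41 μ4 x (P x 1 1)]
    have hE4ge : (∑ x, (P x 0 0 * (min (A x 0) (Bv x 0))
            + (P x 0 1 * (min (Bv x 1) (A x 0))
            + (P x 1 0 * (min (Bv x 0) (A x 1))
            + P x 1 1 * (min (Bv x 1) (A x 1) - 1/2))))) ≤ pc := by
      refine le_trans (Finset.sum_le_sum fun x _ => ?_) (le_of_eq_of_le hE4eq.symm hE4le)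
      have e1 : (min (A x 0) (Bv x 0)) ≤ ∑ y1, ∑ y4, μ4 y1 x x y4 := by
        rw [h4v x x]; exact hC1d x
      have e2 : (min (Bv x 1) (A x 0)) ≤ ∑ y3, ∑ y4, μ4 x x y3 y4 := by
        rw [h4u x x]; exact hC4d x
      have e3 : (min (Bv x 0) (A x 1)) ≤ ∑ y1, ∑ y2, μ4 y1 y2 x x := by
        rw [h4w x x]; exact hC2d x
      have e4 : (min (Bv x 1) (A x 1) - 1/2) ≤ ∑ y2, ∑ y3, μ4 x y2 y3 x := by
        refine broken_bound _ _ _ ?_ (h4f x)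
        exact Finset.sum_nonneg fun y2 _ => Finset.sum_nonneg fun y3 _ => h4n x y2 y3 x
      have m1 := mul_le_mul_of_nonneg_left e1 (hP0 x 0 0)
      have m2 := mul_le_mul_of_nonneg_left e2 (hP0 x 0 1)
      have m3 := mul_le_mul_of_nonneg_left e3 (hP0 x 1 0)
      have m4 := mul_le_mul_of_nonneg_left e4 (hP0 x 1 1)
      linarith

    -- combine the four rotations
    set Gm : ℝ := ∑ x, (P x 0 0 * min (A x 0) (Bv x 0) + (P x 0 1 * min (A x 0) (Bv x 1)
        + (P x 1 0 * min (A x 1) (Bv x 0) + P x 1 1 * min (A x 1) (Bv x 1)))) with hGm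
    have hPtot : (∑ x, (P x 0 0 + (P x 0 1 + (P x 1 0 + P x 1 1)))) = 1 := by
      rw [← hP1]
      refine Finset.sum_congr rfl fun x _ => ?_
      rw [Fin.sum_univ_two, Fin.sum_univ_two, Fin.sum_univ_two]
      ring
    have hkey : 4 * Gm - 1/2 ≤ 4 * pc := by
      have hsum : (∑ x, (P x 0 0 * min (A x 0) (Bv x 0)
            + (P x 0 1 * (min (A x 0) (Bv x 1) - 1/2)
            + (P x 1 0 * min (Bv x 0) (A x 1)
            + P x 1 1 * min (A x 1) (Bv x 1)))))
          + ((∑ x, (P x 0 0 * (min (Bv x 0) (A x 0) - 1/2)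
            + (P x 0 1 * min (Bv x 1) (A x 0)
            + (P x 1 0 * min (Bv x 0) (A x 1)
            + P x 1 1 * min (A x 1) (Bv x 1)))))
          + ((∑ x, (P x 0 0 * min (A x 0) (Bv x 0)
            + (P x 0 1 * min (Bv x 1) (A x 0)
            + (P x 1 0 * (min (A x 1) (Bv x 0) - 1/2)
            + P x 1 1 * min (A x 1) (Bv x 1)))))
          + (∑ x, (P x 0 0 * min (A x 0) (Bv x 0)
            + (P x 0 1 * min (Bv x 1) (A x 0)
            + (P x 1 0 * min (Bv x 0) (A x 1)
            + P x 1 1 * (min (Bv x 1) (A x 1) - 1/2)))))))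
          = 4 * Gm - 1/2 * ∑ x, (P x 0 0 + (P x 0 1 + (P x 1 0 + P x 1 1))) := by
        rw [hGm, Finset.mul_sum, Finset.mul_sum, ← Finset.sum_add_distrib,
          ← Finset.sum_add_distrib, ← Finset.sum_add_distrib, ← Finset.sum_sub_distrib]
        refine Finset.sum_congr rfl fun x _ => ?_
        rw [min_comm (Bv x 0) (A x 0), min_comm (Bv x 1) (A x 0),
          min_comm (Bv x 0) (A x 1), min_comm (Bv x 1) (A x 1)]
        ring
      rw [hPtot, mul_one] at hsum
      linarith [hE1ge, hE2ge, hE3ge, hE4ge, hsum.symm.le, hsum.le]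
    have homega : (∑ x, ∑ a, ∑ b, P x a b * Q x x a b) ≤ Gm := by
      have hmin : ∀ x a b, Q x x a b ≤ min (A x a) (Bv x b) :=
        fun x a b => le_min (hQA x a b) (hQB x a b)
      calc (∑ x, ∑ a, ∑ b, P x a b * Q x x a b)
          ≤ ∑ x, ∑ a, ∑ b, P x a b * min (A x a) (Bv x b) := by
            refine Finset.sum_le_sum fun x _ => Finset.sum_le_sum fun a _ =>
              Finset.sum_le_sum fun b _ => ?_
            exact mul_le_mul_of_nonneg_left (hmin x a b) (hP0 x a b)
        _ = Gm := by
            rw [hGm]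
            refine Finset.sum_congr rfl fun x _ => ?_
            rw [Fin.sum_univ_two, Fin.sum_univ_two, Fin.sum_univ_two]
            ring
    linarith
  exact le_min bound1 bound2
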